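/- Consider the family of one-dimensional BVASS B_n with states {q, q_f, q_0, …, q_n}, transitions (q,+1,q), (q,0,q_n), (q_i, q_{i-1}, q_{i-1}) for 0 < i ≤ n, (q_0, -1, q_f), and final state set {q_f}. Then for every i ∈ [0,n], the configuration q_i(N) is reachable if and only if N = 2^i. -/

import Mathlib

/-- A one-dimensional branching vector addition system with states:
branching transitions `br`, unary transitions `un` with update in `{-1,0,1}`,
and final states `final`. -/
structure BVASS1 (Q : Type) where
  br : Q → Q → Q → Prop
  un : Q → ℤ → Q → Prop
  un_small : ∀ q z p, un q z p → z = -1 ∨ z = 0 ∨ z = 1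
  final : Q → Prop

/-- A finite binary tree with nodes given by a prefix-closed set of words over
`Bool` and labels in `Q × ℕ`. -/
structure BTree (Q : Type) where
  dom : Set (List Bool)
  label : List Bool → Q × ℕ
  finite : dom.Finite
  root_mem : ([] : List Bool) ∈ dom
  prefixClosed : ∀ ⦃u v : List Bool⦄, v ∈ dom → u <+: v → u ∈ dom

/-- `u` is a strict ancestor of `v`. -/
def StrictPrefix (u v : List Bool) : Prop := u <+: v ∧ u ≠ v

/-- `u` is the lowest common ancestor of `v` and `w`. -/
def IsLCA (u v w : List Bool) : Prop :=
  u <+: v ∧ u <+: w ∧ ∀ u', u' <+: v → u' <+: w → u' <+: u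

namespace BTree

variable {Q : Type}

def state (T : BTree Q) (u : List Bool) : Q := (T.label u).1

def counter (T : BTree Q) (u : List Bool) : ℕ := (T.label u).2

def IsLeaf (T : BTree Q) (u : List Bool) : Prop :=
  u ∈ T.dom ∧ ∀ b : Bool, u ++ [b] ∉ T.dom

/-- The subtree of `T` rooted at node `u`. -/
def subtree (T : BTree Q) (u : List Bool) (hu : u ∈ T.dom) : BTree Q where
  dom := {x | u ++ x ∈ T.dom}
  label := fun x => T.label (u ++ x)
  finite := Set.Finite.preimage
    (Function.Injective.injOn fun a b h => by simpa using h) T.finite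
  root_mem := by simpa using hu
  prefixClosed := by
    rintro a c hc ⟨t, rfl⟩
    exact T.prefixClosed hc ⟨t, by simp⟩

/-- All counter values in the tree are at most `j`. -/
def Bounded (T : BTree Q) (j : ℕ) : Prop := ∀ u ∈ T.dom, T.counter u ≤ j

/-- All counter values, except possibly the root's, are at most `j`. -/
def AlmostBounded (T : BTree Q) (j : ℕ) : Prop :=
  ∀ u ∈ T.dom, u ≠ [] → T.counter u ≤ j

/-- A node is increasing if it has a strict ancestor with the same state
and a strictly smaller counter value. -/
def Increasing (T : BTree Q) (v : List Bool) : Prop :=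
  ∃ u ∈ T.dom, StrictPrefix u v ∧ T.state u = T.state v ∧ T.counter u < T.counter v

/-- `u` is the anchor of the increasing node `v`: the maximal strict ancestor of `v`
with the same state and strictly smaller counter value. -/
def IsAnchorOf (T : BTree Q) (u v : List Bool) : Prop :=
  u ∈ T.dom ∧ StrictPrefix u v ∧ T.state u = T.state v ∧ T.counter u < T.counter v ∧
    ∀ u' ∈ T.dom, StrictPrefix u' v → T.state u' = T.state v →
      T.counter u' < T.counter v → u' <+: u

/-- The tree is exclusive: the least common ancestor of any two distinct increasing
leaves is a strict ancestor of at least one of their anchors. -/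
def Exclusive (T : BTree Q) : Prop :=
  ∀ v w, T.IsLeaf v → T.IsLeaf w → T.Increasing v → T.Increasing w → v ≠ w →
    ∀ a b l, T.IsAnchorOf a v → T.IsAnchorOf b w → IsLCA l v w →
      StrictPrefix l a ∨ StrictPrefix l b

end BTree

namespace BVASS1

variable {Q : Type}

/-- `T` is a partial reachability tree of `B`: at every inner node either a
branching transition splits the counter over two children, or a unary transition
changes the counter by `z` along a single-child edge. -/
def IsPRT (B : BVASS1 Q) (T : BTree Q) : Prop :=
  ∀ u ∈ T.dom, ¬ T.IsLeaf u →
    ((u ++ [false] ∈ T.dom ∧ u ++ [true] ∈ T.dom ∧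
        B.br (T.state u) (T.state (u ++ [false])) (T.state (u ++ [true])) ∧
        T.counter u = T.counter (u ++ [false]) + T.counter (u ++ [true])) ∨
     (u ++ [false] ∈ T.dom ∧ u ++ [true] ∉ T.dom ∧
        ∃ z : ℤ, B.un (T.state u) z (T.state (u ++ [false])) ∧
          (T.counter (u ++ [false]) : ℤ) = (T.counter u : ℤ) + z))

/-- `T` is a (full) reachability tree of `B`: a partial reachability tree all of
whose leaves are accepting (final state, counter zero). -/
def IsRT (B : BVASS1 Q) (T : BTree Q) : Prop :=
  B.IsPRT T ∧ ∀ u, T.IsLeaf u → B.final (T.state u) ∧ T.counter u = 0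

/-- The configuration `q(n)` is reachable. -/
def Reachable (B : BVASS1 Q) (q : Q) (n : ℕ) : Prop :=
  ∃ T : BTree Q, B.IsRT T ∧ T.label [] = (q, n)

/-- The reachability set of a control state. -/
def reachSet (B : BVASS1 Q) (q : Q) : Set ℕ := {n | B.Reachable q n}

/-- The configuration `q(n)` is coverable. -/
def Coverable (B : BVASS1 Q) (q : Q) (n : ℕ) : Prop :=
  ∃ m, n ≤ m ∧ B.Reachable q m

/-- `T` is expandable: exclusive, every leaf is accepting or increasing, and every
increasing leaf with its anchor induces a positive residue-reachability instance. -/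
def Expandable (B : BVASS1 Q) (T : BTree Q) : Prop :=
  T.Exclusive ∧
  (∀ v, T.IsLeaf v → (B.final (T.state v) ∧ T.counter v = 0) ∨ T.Increasing v) ∧
  (∀ v u, T.IsLeaf v → T.IsAnchorOf u v →
    ∃ l, B.Reachable (T.state v) l ∧ T.counter v ≤ l ∧
      l ≡ T.counter v [MOD T.counter v - T.counter u])

end BVASS1

/-- States of the doubling gadget `B_n`. -/
inductive GState (n : ℕ) : Type
  | q : GState n
  | qf : GState n
  | qi : Fin (n + 1) → GState n

/-- The doubling gadget `B_n`: transitions `(q,+1,q)`, `(q,0,q_n)`,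
`(q_i, q_{i-1}, q_{i-1})` for `0 < i ≤ n`, `(q_0,-1,q_f)`; final state `q_f`. -/
def Bn (n : ℕ) : BVASS1 (GState n) where
  br a b c := ∃ i : Fin (n + 1), 0 < (i : ℕ) ∧ a = .qi i ∧
      b = .qi ⟨(i : ℕ) - 1, lt_of_le_of_lt (Nat.sub_le _ _) i.isLt⟩ ∧
      c = .qi ⟨(i : ℕ) - 1, lt_of_le_of_lt (Nat.sub_le _ _) i.isLt⟩
  un a z b :=
      (a = .q ∧ z = 1 ∧ b = .q) ∨
      (a = .q ∧ z = 0 ∧ b = .qi ⟨n, Nat.lt_succ_self n⟩) ∨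
      (a = .qi ⟨0, Nat.succ_pos n⟩ ∧ z = -1 ∧ b = .qf)
  un_small := by rintro a z b (⟨_, rfl, _⟩ | ⟨_, rfl, _⟩ | ⟨_, rfl, _⟩) <;> norm_num
  final a := a = .qf

section Aux

variable {Q : Type}

lemma BTree.subtree_isLeaf_iff (T : BTree Q) (u : List Bool) (hu : u ∈ T.dom) (x : List Bool) :
    (T.subtree u hu).IsLeaf x ↔ T.IsLeaf (u ++ x) := by
  simp [BTree.IsLeaf, BTree.subtree, List.append_assoc]

lemma BVASS1.subtree_isRT (B : BVASS1 Q) (T : BTree Q) (h : B.IsRT T) (u : List Bool)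
    (hu : u ∈ T.dom) : B.IsRT (T.subtree u hu) := by
  constructor
  · intro x hx hleaf
    rw [BTree.subtree_isLeaf_iff] at hleaf
    have := h.1 (u ++ x) hx hleaf
    simpa [BTree.subtree, BTree.state, BTree.counter, List.append_assoc] using this
  · intro x hx
    rw [BTree.subtree_isLeaf_iff] at hx
    exact h.2 (u ++ x) hx

/-- In `Bn n`, every node with state `qf` is a leaf of any PRT. -/
lemma qf_isLeaf {n : ℕ} (T : BTree (GState n)) (h : (Bn n).IsPRT T) (x : List Bool)
    (hx : x ∈ T.dom) (hs : T.state x = .qf) : T.IsLeaf x := by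
  by_contra hleaf
  rcases h x hx hleaf with ⟨_, _, ⟨j, _, hj, _⟩, _⟩ | ⟨_, _, z, hun, _⟩
  · rw [hs] at hj; exact absurd hj (by simp [Bn])
  · rcases hun with ⟨ha, _⟩ | ⟨ha, _⟩ | ⟨ha, _⟩ <;> rw [hs] at ha <;> simp_all

/-- Backward direction: any reachable value at `qi i` is `2 ^ i`. -/
lemma gstate_back {n : ℕ} : ∀ (k : ℕ) (i : Fin (n + 1)), (i : ℕ) = k →
    ∀ (N : ℕ) (T : BTree (GState n)), (Bn n).IsRT T → T.label [] = (.qi i, N) → N = 2 ^ k := by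
  intro k
  induction k with
  | zero =>
    intro i hi N T hT hroot
    have hst : T.state [] = .qi i := by simp [BTree.state, hroot]
    have hct : T.counter [] = N := by simp [BTree.counter, hroot]
    have hleaf : ¬ T.IsLeaf [] := by
      intro hl
      have := (hT.2 [] hl).1
      rw [hst] at this; exact absurd this (by simp [Bn, BVASS1.final])
    rcases hT.1 [] T.root_mem hleaf with ⟨_, _, ⟨j, hj0, hj, _⟩, _⟩ | ⟨hf, _, z, hun, hcnt⟩
    · rw [hst] at hj
      have h' : i = j := GState.qi.inj hj
      rw [h'] at hi; omega
    · rcases hun with ⟨ha, _⟩ | ⟨ha, _⟩ | ⟨_, hz, hb⟩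
      · rw [hst] at ha; simp_all
      · rw [hst] at ha; simp_all
      · have hleaf' : T.IsLeaf [false] := qf_isLeaf T hT.1 _ hf hb
        have h0 : T.counter [false] = 0 := (hT.2 _ hleaf').2
        simp only [List.nil_append, hz, h0, hct] at hcnt
        omega
  | succ m ih =>
    intro i hi N T hT hroot
    have hst : T.state [] = .qi i := by simp [BTree.state, hroot]
    have hct : T.counter [] = N := by simp [BTree.counter, hroot]
    have hleaf : ¬ T.IsLeaf [] := by
      intro hl
      have := (hT.2 [] hl).1
      rw [hst] at this; exact absurd this (by simp [Bn, BVASS1.final])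
    rcases hT.1 [] T.root_mem hleaf with ⟨hf, ht, ⟨j, hj0, hj, hb, hc⟩, hsum⟩ |
      ⟨hf, _, z, hun, hcnt⟩
    · rw [hst] at hj
      have hij : i = j := GState.qi.inj hj
      subst hij
      have key : ∀ (u : List Bool) (hu : u ∈ T.dom),
          T.state u = .qi ⟨(i : ℕ) - 1, lt_of_le_of_lt (Nat.sub_le _ _) i.isLt⟩ →
          T.counter u = 2 ^ m := by
        intro u hu hsu
        refine ih ⟨(i : ℕ) - 1, lt_of_le_of_lt (Nat.sub_le _ _) i.isLt⟩ (by simp; omega) _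
          (T.subtree u hu) ((Bn n).subtree_isRT T hT u hu) ?_
        show T.label (u ++ []) = _
        rw [List.append_nil]
        have : T.label u = (T.state u, T.counter u) := rfl
        rw [this, hsu]
      have h1 := key _ hf hb
      have h2 := key _ ht hc
      rw [hct, h1, h2] at hsum
      rw [hsum]; ring
    · rcases hun with ⟨ha, _⟩ | ⟨ha, _⟩ | ⟨ha, _, _⟩ <;> rw [hst] at ha
      · simp_all
      · simp_all
      · have h' : i = ⟨0, Nat.succ_pos n⟩ := GState.qi.inj ha
        rw [h'] at hi; simp at hi

/-- The explicit reachability tree for `qi i` with counter `2 ^ i`. -/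
def gTree (n : ℕ) (i : Fin (n + 1)) : BTree (GState n) where
  dom := {u | u.length ≤ (i : ℕ) ∨ (u.length = (i : ℕ) + 1 ∧ ∃ v, u = v ++ [false])}
  label := fun u =>
    if h : u.length ≤ (i : ℕ) then
      (.qi ⟨(i : ℕ) - u.length, by have := i.isLt; omega⟩, 2 ^ ((i : ℕ) - u.length))
    else (.qf, 0)
  finite := Set.Finite.subset (List.finite_length_le Bool ((i : ℕ) + 1))
    (by intro u hu; rcases hu with h | ⟨h, _⟩ <;> simp <;> omega)
  root_mem := Or.inl (by simp)
  prefixClosed := by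
    rintro u v hv huv
    have hlen := huv.length_le
    rcases hv with h | ⟨h, w, rfl⟩
    · exact Or.inl (le_trans hlen h)
    · rcases Nat.lt_or_ge u.length ((i : ℕ) + 1) with h' | h'
      · exact Or.inl (by omega)
      · have : u = w ++ [false] := huv.eq_of_length (by simp_all; omega)
        exact Or.inr ⟨by omega, w, this⟩

lemma gTree_leaf_len {n : ℕ} (i : Fin (n + 1)) (u : List Bool)
    (hu : (gTree n i).IsLeaf u) : u.length = (i : ℕ) + 1 := by
  obtain ⟨hmem, hch⟩ := hu
  by_contra hne
  rcases hmem with h | ⟨h, _⟩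
  · rcases Nat.lt_or_ge u.length (i : ℕ) with h' | h'
    · exact hch false (Or.inl (by simp; omega))
    · have : u.length = (i : ℕ) := le_antisymm h h'
      exact hch false (Or.inr ⟨by simp [this], u, rfl⟩)
  · exact hne h

lemma gTree_isRT (n : ℕ) (i : Fin (n + 1)) : (Bn n).IsRT (gTree n i) := by
  constructor
  · intro u hu hleaf
    have hlen : u.length ≤ (i : ℕ) := by
      by_contra h
      apply hleaf
      refine ⟨hu, fun b hb => ?_⟩
      rcases hb with h' | ⟨h', _⟩ <;> simp at h' <;> rcases hu with h'' | ⟨h'', _⟩ <;> omega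
    rcases Nat.lt_or_ge u.length (i : ℕ) with hl | hl
    · -- branching node
      left
      have hf : u ++ [false] ∈ (gTree n i).dom := Or.inl (by simp; omega)
      have ht : u ++ [true] ∈ (gTree n i).dom := Or.inl (by simp; omega)
      refine ⟨hf, ht, ?_, ?_⟩
      · refine ⟨⟨(i : ℕ) - u.length, by have := i.isLt; omega⟩, by simp; omega, ?_, ?_, ?_⟩ <;>
          simp only [BTree.state, gTree, dif_pos hlen,
            dif_pos (show (u ++ [false]).length ≤ (i : ℕ) by simp; omega),
            dif_pos (show (u ++ [true]).length ≤ (i : ℕ) by simp; omega)] <;>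
          congr 1 <;> apply Fin.ext <;> simp <;> omega
      · simp only [BTree.counter, gTree, dif_pos hlen,
          dif_pos (show (u ++ [false]).length ≤ (i : ℕ) by simp; omega),
          dif_pos (show (u ++ [true]).length ≤ (i : ℕ) by simp; omega)]
        have : (i : ℕ) - u.length = ((i : ℕ) - (u.length + 1)) + 1 := by omega
        rw [this, pow_succ]
        simp [List.length_append]
        ring_nf
    · -- unary node: u.length = i
      have hlen' : u.length = (i : ℕ) := le_antisymm hlen hl
      right
      have hf : u ++ [false] ∈ (gTree n i).dom := Or.inr ⟨by simp [hlen'], u, rfl⟩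
      have hnt : u ++ [true] ∉ (gTree n i).dom := by
        rintro (h | ⟨_, v, hv⟩)
        · simp at h; omega
        · have := congrArg List.getLast? hv
          simp at this
      refine ⟨hf, hnt, -1, ?_, ?_⟩
      · right; right
        refine ⟨?_, rfl, ?_⟩
        · simp only [BTree.state, gTree, dif_pos hlen]
          congr 1; apply Fin.ext; simp; omega
        · simp only [BTree.state, gTree,
            dif_neg (show ¬ (u ++ [false]).length ≤ (i : ℕ) by simp; omega)]
      · simp only [BTree.counter, gTree, dif_pos hlen,
          dif_neg (show ¬ (u ++ [false]).length ≤ (i : ℕ) by simp; omega)]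
        have : (i : ℕ) - u.length = 0 := by omega
        simp [this]
  · intro u hu
    have hlen := gTree_leaf_len i u hu
    have : ¬ u.length ≤ (i : ℕ) := by omega
    constructor
    · simp only [BTree.state, gTree, dif_neg this]; rfl
    · simp only [BTree.counter, gTree, dif_neg this]

end Aux

/-- In `B_n`, the configuration `q_i(N)` is reachable iff `N = 2^i`. -/
theorem stmt2 (n : ℕ) (i : Fin (n + 1)) (N : ℕ) :
    (Bn n).Reachable (.qi i) N ↔ N = 2 ^ (i : ℕ) := by
  constructor
  · rintro ⟨T, hT, hroot⟩
    exact gstate_back (i : ℕ) i rfl N T hT hroot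
  · rintro rfl
    refine ⟨gTree n i, gTree_isRT n i, ?_⟩
    show (if h : (List.length ([] : List Bool)) ≤ (i : ℕ) then _ else ((GState.qf : GState n), 0)) = _
    rw [dif_pos (by simp)]
    simp [gTree]
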